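/- (Consistent completions are provable) For every consistent PNP P: ⊢ P̂ ⇒ ⋁_{Q ∈ comps(P)} Q̂, i.e., the literal interpretation of P provably implies the disjunction of the literal interpretations of its consistent completions. -/

import Mathlib

/-- Syntax of LTLf: variables, falsum, implication, (strong) next, weak until. -/
inductive LTLf (Var : Type) : Type
  | var : Var → LTLf Var
  | bot : LTLf Var
  | imp : LTLf Var → LTLf Var → LTLf Var
  | next : LTLf Var → LTLf Var
  | wuntil : LTLf Var → LTLf Var → LTLf Var
  deriving DecidableEq

namespace LTLf

variable {Var : Type}

/-- ¬φ := φ ⇒ ⊥ -/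
def neg (φ : LTLf Var) : LTLf Var := imp φ bot
/-- ⊤ := ¬⊥ -/
def top : LTLf Var := neg bot
/-- φ ∨ ψ := ¬φ ⇒ ψ -/
def disj (φ ψ : LTLf Var) : LTLf Var := imp (neg φ) ψ
/-- φ ∧ ψ := ¬(¬φ ∨ ¬ψ) -/
def conj (φ ψ : LTLf Var) : LTLf Var := neg (disj (neg φ) (neg ψ))
/-- φ ⟺ ψ := (φ ⇒ ψ) ∧ (ψ ⇒ φ) -/
def liff (φ ψ : LTLf Var) : LTLf Var := conj (imp φ ψ) (imp ψ φ)
/-- end := ¬X⊤ -/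
def endF : LTLf Var := neg (next top)
/-- weak next: •φ := ¬X¬φ -/
def wnext (φ : LTLf Var) : LTLf Var := neg (next (neg φ))
/-- □φ := φ W ⊥ -/
def always (φ : LTLf Var) : LTLf Var := wuntil φ bot
/-- ◇φ := ¬□¬φ -/
def ev (φ : LTLf Var) : LTLf Var := neg (always (neg φ))

/-- A propositional valuation: an assignment of booleans to formulae (treating
variables, next- and weak-until-formulae as opaque atoms) that respects ⊥ and ⇒. -/
def IsPropValuation (f : LTLf Var → Bool) : Prop :=
  f bot = false ∧ ∀ φ ψ : LTLf Var, f (imp φ ψ) = (!(f φ) || f ψ)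

/-- A propositional tautology: true under every propositional valuation. -/
def Tautology (φ : LTLf Var) : Prop :=
  ∀ f : LTLf Var → Bool, IsPropValuation f → f φ = true

/-- The LTLf proof system, with hypotheses drawn from a set `F`:
`F ⊢ φ` means `⊢ φ` is derivable assuming `⊢ ψ` for each `ψ ∈ F`. -/
inductive PrvFrom : Set (LTLf Var) → LTLf Var → Prop
  /-- assumption -/
  | hyp {F φ} : φ ∈ F → PrvFrom F φ
  /-- (Taut) all propositional tautologies -/
  | taut {F φ} : Tautology φ → PrvFrom F φ
  /-- modus ponens (propositional reasoning) -/
  | mp {F φ ψ} : PrvFrom F (imp φ ψ) → PrvFrom F φ → PrvFrom F ψ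
  /-- (WkNextDistr) ⊢ •(φ⇒ψ) ⟺ (•φ ⇒ •ψ) -/
  | wkNextDistr (F) (φ ψ) :
      PrvFrom F (liff (wnext (imp φ ψ)) (imp (wnext φ) (wnext ψ)))
  /-- (EndNextContra) ⊢ end ⇒ ¬Xφ -/
  | endNextContra (F) (φ) : PrvFrom F (imp endF (neg (next φ)))
  /-- (Finite) ⊢ ◇end -/
  | fin (F) : PrvFrom F (ev endF)
  /-- (WkUntilUnroll) ⊢ φ W ψ ⟺ ψ ∨ (φ ∧ •(φ W ψ)) -/
  | wkUntilUnroll (F) (φ ψ) :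
      PrvFrom F (liff (wuntil φ ψ) (disj ψ (conj φ (wnext (wuntil φ ψ)))))
  /-- (WkNextStep) from ⊢ φ infer ⊢ •φ -/
  | wkNextStep {F φ} : PrvFrom F φ → PrvFrom F (wnext φ)
  /-- (Induction) from ⊢ φ⇒ψ and ⊢ φ⇒•φ infer ⊢ φ⇒□ψ -/
  | ind {F φ ψ} :
      PrvFrom F (imp φ ψ) → PrvFrom F (imp φ (wnext φ)) → PrvFrom F (imp φ (always ψ))

/-- `⊢ φ`: provability with no hypotheses. -/
def Prv (φ : LTLf Var) : Prop := PrvFrom ∅ φ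

/-! ## Semantics: finite nonempty traces.
A trace of length `n ≥ 1` is given by valuations `η i : Var → Bool` for `1 ≤ i ≤ n`. -/

/-- `Holds η n φ i` says that `K^n_i(φ) = t` in the trace `(η 1, …, η n)`. -/
def Holds (η : ℕ → Var → Bool) (n : ℕ) : LTLf Var → ℕ → Prop
  | var v, i => η i v = true
  | bot, _ => False
  | imp φ ψ, i => Holds η n φ i → Holds η n ψ i
  | next φ, i => i < n ∧ Holds η n φ (i + 1)
  | wuntil φ ψ, i =>
      (∀ j, i ≤ j → j ≤ n → Holds η n φ j) ∨
      (∃ k, i ≤ k ∧ k ≤ n ∧ Holds η n ψ k ∧ ∀ j, i ≤ j → j < k → Holds η n φ j)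

/-- `K^n ⊨ φ`: φ holds at every time step `1 ≤ i ≤ n`. -/
def Models (η : ℕ → Var → Bool) (n : ℕ) (φ : LTLf Var) : Prop :=
  ∀ i, 1 ≤ i → i ≤ n → Holds η n φ i

/-- `⊨ φ`: φ is valid, i.e., satisfied by every finite nonempty trace. -/
def Valid (φ : LTLf Var) : Prop :=
  ∀ (n : ℕ), 1 ≤ n → ∀ η : ℕ → Var → Bool, Models η n φ

/-- `F ⊨ φ`: φ is valid under the assumptions `F`. -/
def ValidUnder (F : Set (LTLf Var)) (φ : LTLf Var) : Prop :=
  ∀ (n : ℕ), 1 ≤ n → ∀ η : ℕ → Var → Bool,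
    (∀ ψ ∈ F, Models η n ψ) → Models η n φ

/-! ## Positive-negative pairs (PNPs) -/

/-- A positive-negative pair: two finite sets of formulae. -/
structure PNP (Var : Type) where
  pos : Finset (LTLf Var)
  neg : Finset (LTLf Var)

/-- Conjunction of a list of formulae. -/
def conjList : List (LTLf Var) → LTLf Var
  | [] => top
  | φ :: rest => conj φ (conjList rest)

/-- Disjunction of a list of formulae. -/
def disjList : List (LTLf Var) → LTLf Var
  | [] => bot
  | φ :: rest => disj φ (disjList rest)

variable [DecidableEq Var]

/-- Literal interpretation `P̂`: conjunction of all of `pos P` and of the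
negations of all of `neg P`. -/
noncomputable def PNP.interp (P : PNP Var) : LTLf Var :=
  conjList (P.pos.toList ++ P.neg.toList.map LTLf.neg)

/-- `P` is consistent iff it is not the case that `⊢ ¬P̂`. -/
def PNP.Consistent (P : PNP Var) : Prop := ¬ Prv (LTLf.neg P.interp)

/-- `F_P := pos(P) ∪ neg(P)`. -/
def PNP.forms (P : PNP Var) : Finset (LTLf Var) := P.pos ∪ P.neg

/-- Helper for σ: `{φ | Xφ ∈ S}` pointwise. -/
def nextArgs : LTLf Var → Finset (LTLf Var)
  | next φ => {φ}
  | _ => ∅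

/-- Helper for σ⁺₂: keep `φ W ψ` when `ψ` is in the given (negative) set. -/
def wPosStep (N : Finset (LTLf Var)) : LTLf Var → Finset (LTLf Var)
  | wuntil φ ψ => if ψ ∈ N then {wuntil φ ψ} else ∅
  | _ => ∅

/-- Helper for σ⁻₄: keep `φ W ψ` when `φ` is in the given (positive) set. -/
def wNegStep (Pos : Finset (LTLf Var)) : LTLf Var → Finset (LTLf Var)
  | wuntil φ ψ => if φ ∈ Pos then {wuntil φ ψ} else ∅
  | _ => ∅

/-- The step function σ. -/
def PNP.step (P : PNP Var) : PNP Var :=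
  ⟨P.pos.biUnion nextArgs ∪ P.pos.biUnion (wPosStep P.neg),
   P.neg.biUnion nextArgs ∪ P.neg.biUnion (wNegStep P.pos)⟩

/-- The closure function τ on formulae. -/
def tau : LTLf Var → Finset (LTLf Var)
  | var v => {var v}
  | bot => {bot}
  | imp φ ψ => insert (imp φ ψ) (tau φ ∪ tau ψ)
  | next φ => {next φ}
  | wuntil φ ψ => insert (wuntil φ ψ) (tau φ ∪ tau ψ)

/-- τ on finite sets of formulae. -/
def tauSet (F : Finset (LTLf Var)) : Finset (LTLf Var) := F.biUnion tau

/-- τ(P) := τ(F_P). -/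
def PNP.tauP (P : PNP Var) : Finset (LTLf Var) := tauSet P.forms

/-- `P ≼ Q`. -/
def PNP.Extends (P Q : PNP Var) : Prop := P.pos ⊆ Q.pos ∧ P.neg ⊆ Q.neg

/-- `assigns(F)`: PNPs whose formulae are exactly `τ(F)`. -/
def Assigns (F : Finset (LTLf Var)) : Set (PNP Var) :=
  {P | P.forms = tauSet F}

/-- `comps(P)`: consistent completions of `P`. -/
def Comps (P : PNP Var) : Set (PNP Var) :=
  {Q | Q.forms = P.tauP ∧ P.Extends Q ∧ Q.Consistent}

/-- `assigns(F)` as a finite set. -/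
noncomputable def assignsF (F : Finset (LTLf Var)) : Finset (PNP Var) := by
  classical
  exact (((tauSet F).powerset ×ˢ (tauSet F).powerset).filter
      (fun p => p.1 ∪ p.2 = tauSet F)).image (fun p => ⟨p.1, p.2⟩)

/-- `comps(P)` as a finite set. -/
noncomputable def compsF (P : PNP Var) : Finset (PNP Var) := by
  classical
  exact (assignsF P.forms).filter (fun Q => P.Extends Q ∧ Q.Consistent)

/-! ### Auxiliary lemmas for the completion theorem -/

section Aux

variable {f : LTLf Var → Bool}

lemma val_neg (hf : IsPropValuation f) (φ : LTLf Var) : f (LTLf.neg φ) = !f φ := by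
  simp [LTLf.neg, hf.2, hf.1]

lemma val_top (hf : IsPropValuation f) : f (top : LTLf Var) = true := by
  simp [top, val_neg hf, hf.1]

lemma val_disj (hf : IsPropValuation f) (φ ψ : LTLf Var) :
    f (disj φ ψ) = (f φ || f ψ) := by
  simp [disj, hf.2, val_neg hf]

lemma val_conj (hf : IsPropValuation f) (φ ψ : LTLf Var) :
    f (conj φ ψ) = (f φ && f ψ) := by
  simp [conj, val_neg hf, val_disj hf]

lemma val_conjList (hf : IsPropValuation f) (l : List (LTLf Var)) :
    f (conjList l) = l.all f := by
  induction l with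
  | nil => simp [conjList, val_top hf]
  | cons φ rest ih => simp [conjList, val_conj hf, ih]

lemma val_disjList (hf : IsPropValuation f) (l : List (LTLf Var)) :
    f (disjList l) = l.any f := by
  induction l with
  | nil => simp [disjList, hf.1]
  | cons φ rest ih => simp [disjList, val_disj hf, ih]

/-- Modus ponens twice with a tautology. -/
lemma prv_taut_mp2 {a b c : LTLf Var} (h : Tautology (imp a (imp b c)))
    (ha : Prv a) (hb : Prv b) : Prv c :=
  PrvFrom.mp (PrvFrom.mp (PrvFrom.taut h) ha) hb

lemma mem_disjList_taut {φ : LTLf Var} {l : List (LTLf Var)} (h : φ ∈ l) :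
    Tautology (imp φ (disjList l)) := by
  intro f hf
  rw [hf.2, val_disjList hf]
  cases hφ : f φ with
  | false => simp
  | true => simp [List.any_eq_true]; exact ⟨φ, h, hφ⟩

lemma disjList_mono {l1 l2 : List (LTLf Var)}
    (h : ∀ φ ∈ l1, φ ∈ l2 ∨ Prv (LTLf.neg φ)) :
    Prv (imp (disjList l1) (disjList l2)) := by
  induction l1 with
  | nil =>
    apply PrvFrom.taut
    intro f hf
    simp [disjList, hf.2, hf.1]
  | cons φ rest ih =>
    have ihr : Prv (imp (disjList rest) (disjList l2)) :=
      ih (fun ψ hψ => h ψ (List.mem_cons_of_mem _ hψ))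
    rcases h φ (List.mem_cons_self) with hm | hn
    · have h1 : Prv (imp φ (disjList l2)) := PrvFrom.taut (mem_disjList_taut hm)
      refine prv_taut_mp2 ?_ h1 ihr
      intro f hf
      simp only [disjList, hf.2, val_disj hf]
      cases f φ <;> cases f (disjList rest) <;> cases f (disjList l2) <;> simp
    · refine prv_taut_mp2 ?_ hn ihr
      intro f hf
      simp only [disjList, hf.2, val_disj hf, val_neg hf]
      cases f φ <;> cases f (disjList rest) <;> cases f (disjList l2) <;> simp

lemma self_mem_tau (φ : LTLf Var) : φ ∈ tau φ := by
  cases φ <;> simp [tau]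

variable [DecidableEq Var]

lemma subset_tauSet (F : Finset (LTLf Var)) : F ⊆ tauSet F := by
  intro φ hφ
  exact Finset.mem_biUnion.2 ⟨φ, hφ, self_mem_tau φ⟩

lemma mem_assignsF {F : Finset (LTLf Var)} {Q : PNP Var} :
    Q ∈ assignsF F ↔ Q.forms = tauSet F := by
  classical
  unfold assignsF
  simp only [Finset.mem_image, Finset.mem_filter, Finset.mem_product,
    Finset.mem_powerset, Prod.exists]
  constructor
  · rintro ⟨a, b, ⟨⟨ha, hb⟩, hab⟩, rfl⟩
    exact hab
  · intro h
    refine ⟨Q.pos, Q.neg, ⟨⟨?_, ?_⟩, h⟩, rfl⟩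
    · exact h ▸ (Finset.subset_union_left : Q.pos ⊆ Q.forms)
    · exact h ▸ (Finset.subset_union_right : Q.neg ⊆ Q.forms)

/-- All assignments over `τ(P)` extending `P`. -/
noncomputable def extAssigns (P : PNP Var) : Finset (PNP Var) := by
  classical
  exact (assignsF P.forms).filter (fun Q => P.Extends Q)

lemma val_interp_true (hf : IsPropValuation f) {Q : PNP Var} :
    f Q.interp = true ↔
      (∀ φ ∈ Q.pos, f φ = true) ∧ (∀ ψ ∈ Q.neg, f ψ = false) := by
  rw [PNP.interp, val_conjList hf, List.all_eq_true]
  constructor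
  · intro h
    constructor
    · intro φ hφ
      exact h φ (List.mem_append_left _ (Finset.mem_toList.2 hφ))
    · intro ψ hψ
      have := h (LTLf.neg ψ)
        (List.mem_append_right _ (List.mem_map_of_mem (Finset.mem_toList.2 hψ)))
      rw [val_neg hf] at this
      simpa using this
  · rintro ⟨h1, h2⟩ φ hφ
    rcases List.mem_append.1 hφ with h | h
    · exact h1 φ (Finset.mem_toList.1 h)
    · rcases List.mem_map.1 h with ⟨ψ, hψ, rfl⟩
      rw [val_neg hf, h2 ψ (Finset.mem_toList.1 hψ)]
      rfl

/-- The main propositional tautology: `P̂` implies the disjunction of all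
assignments over `τ(P)` that extend `P`. -/
lemma extAssigns_taut (P : PNP Var) :
    Tautology (imp P.interp (disjList ((extAssigns P).toList.map PNP.interp))) := by
  classical
  intro f hf
  rw [hf.2]
  cases hP : f P.interp with
  | false => simp
  | true =>
    simp only [Bool.not_true, Bool.false_or]
    obtain ⟨hpos, hneg⟩ := (val_interp_true hf).1 hP
    set Qf : PNP Var :=
      ⟨P.tauP.filter (fun φ => f φ = true), P.tauP.filter (fun φ => f φ = false)⟩
      with hQf
    have hforms : Qf.forms = P.tauP := by
      rw [hQf]
      simp only [PNP.forms]
      ext φ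
      simp only [Finset.mem_union, Finset.mem_filter]
      cases hφ : f φ <;> simp [hφ] <;> tauto
    have hmem : Qf ∈ extAssigns P := by
      unfold extAssigns
      rw [Finset.mem_filter]
      refine ⟨mem_assignsF.2 hforms, ?_, ?_⟩
      · intro φ hφ
        exact Finset.mem_filter.2
          ⟨subset_tauSet _ (Finset.mem_union_left _ hφ), hpos φ hφ⟩
      · intro ψ hψ
        exact Finset.mem_filter.2
          ⟨subset_tauSet _ (Finset.mem_union_right _ hψ), hneg ψ hψ⟩
    have hQtrue : f Qf.interp = true := by
      refine (val_interp_true hf).2 ⟨?_, ?_⟩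
      · intro φ hφ
        exact (Finset.mem_filter.1 hφ).2
      · intro ψ hψ
        exact (Finset.mem_filter.1 hψ).2
    rw [val_disjList hf, List.any_eq_true]
    exact ⟨Qf.interp, List.mem_map_of_mem (Finset.mem_toList.2 hmem), hQtrue⟩

end Aux

/-- Consistent completions are provable: for every consistent PNP `P`,
⊢ P̂ ⇒ ⋁_{Q ∈ comps(P)} Q̂. -/
theorem ltlf_completions_provable {Var : Type} [DecidableEq Var] (P : PNP Var)
    (hP : P.Consistent) :
    Prv (imp P.interp (disjList ((compsF P).toList.map PNP.interp))) := by
  classical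
  have h1 : Prv (imp P.interp (disjList ((extAssigns P).toList.map PNP.interp))) :=
    PrvFrom.taut (extAssigns_taut P)
  have h2 : Prv (imp (disjList ((extAssigns P).toList.map PNP.interp))
      (disjList ((compsF P).toList.map PNP.interp))) := by
    apply disjList_mono
    intro χ hχ
    rcases List.mem_map.1 hχ with ⟨Q, hQ, rfl⟩
    have hQ' := Finset.mem_filter.1 (Finset.mem_toList.1 hQ)
    by_cases hc : Q.Consistent
    · left
      apply List.mem_map_of_mem
      apply Finset.mem_toList.2
      unfold compsF
      exact Finset.mem_filter.2 ⟨hQ'.1, hQ'.2, hc⟩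
    · right
      exact not_not.mp hc
  refine prv_taut_mp2 ?_ h1 h2
  intro f hf
  simp only [hf.2]
  cases f P.interp <;>
    cases f (disjList ((extAssigns P).toList.map PNP.interp)) <;>
    cases f (disjList ((compsF P).toList.map PNP.interp)) <;> simp

end LTLf
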